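/- arXiv:2409.13491 — 3 statements merged into one kernel-verified Lean document; each statement's English description precedes it below -/
import Mathlib

section
/- Let G be a simple graph on n ≥ 3 vertices. If every two nonadjacent vertices of G have degree sum at least n, then G is Hamiltonian (contains a cycle through all vertices). -/
open List SimpleGraph
set_option linter.unusedVariables false
set_option linter.unusedSectionVars false
namespace OreProof
variable {V : Type*} [Fintype V] [DecidableEq V]

def mkWalk (G : SimpleGraph V) : (a b : V) → (l : List V) → List.Chain G.Adj a (l ++ [b]) → G.Walk a b
  | _, _, [], h => SimpleGraph.Walk.cons (List.chain_cons.mp h).1 SimpleGraph.Walk.nil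
  | a, b, c :: l, h => SimpleGraph.Walk.cons (List.chain_cons.mp h).1 (mkWalk G c b l (List.chain_cons.mp h).2)

lemma mkWalk_support (G : SimpleGraph V) : ∀ (a b : V) (l : List V) (h : List.Chain G.Adj a (l ++ [b])),
    (mkWalk G a b l h).support = a :: (l ++ [b])
  | _, _, [], _ => rfl
  | a, b, c :: l, h => by exact (Walk.support_cons _ _).trans (congrArg (a :: ·) (mkWalk_support G c b l _))

lemma mkWalk_length (G : SimpleGraph V) (a b : V) (l : List V) (h : List.Chain G.Adj a (l ++ [b])) :
    (mkWalk G a b l h).length = l.length + 1 := by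
  have := (mkWalk G a b l h).length_support
  rw [mkWalk_support] at this
  simp at this; omega

lemma endpoints_not_mem_edges {G : SimpleGraph V} {x y : V} {p : G.Walk x y}
    (hp : p.IsPath) (hl : 2 ≤ p.length) : s(x, y) ∉ p.edges := by
  cases p with
  | nil => simp at hl
  | @cons _ w _ h q =>
    rw [Walk.edges_cons, List.mem_cons]
    rintro (heq | hmem)
    · rw [Sym2.eq_iff] at heq
      rcases heq with ⟨-, rfl⟩ | ⟨rfl, rfl⟩
      · obtain rfl := Walk.isPath_iff_eq_nil.mp hp.of_cons
        simp at hl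
      · exact h.ne rfl
    · exact (Walk.cons_isPath_iff h q).mp hp |>.2 (q.fst_mem_support_of_mem_edges hmem)

lemma mkWalk_isHamiltonianCycle {G : SimpleGraph V} {a : V} {l : List V}
    (h : List.Chain G.Adj a (l ++ [a])) (hnd : (a :: l).Nodup)
    (hlen : 2 ≤ l.length) (hmem : ∀ x : V, x ∈ a :: l) :
    (mkWalk G a a l h).IsHamiltonianCycle := by
  cases l with
  | nil => simp at hlen
  | cons c rest =>
    rw [Walk.isHamiltonianCycle_iff_isCycle_and_support_count_tail_eq_one]
    have hpath : (mkWalk G c a rest (List.chain_cons.mp h).2).IsPath := by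
      apply Walk.IsPath.mk'
      rw [mkWalk_support G c a rest (List.chain_cons.mp h).2]
      have hperm : ((c :: rest) ++ [a]).Perm (a :: c :: rest) := perm_append_singleton a (c :: rest)
      have : (c :: (rest ++ [a])).Nodup := by
        rw [show c :: (rest ++ [a]) = (c :: rest) ++ [a] by simp, hperm.nodup_iff]
        exact hnd
      simpa using this
    constructor
    · show (Walk.cons _ (mkWalk G c a rest _)).IsCycle
      rw [Walk.cons_isCycle_iff]
      refine ⟨hpath, ?_⟩
      rw [Sym2.eq_swap]
      apply endpoints_not_mem_edges hpath
      rw [mkWalk_length G c a rest (List.chain_cons.mp h).2]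
      simp at hlen ⊢; omega
    · intro x
      show (mkWalk G a a (c :: rest) h).support.tail.count x = 1
      rw [mkWalk_support]
      simp only [List.tail_cons]
      have hperm : ((c :: rest) ++ [a]).Perm (a :: c :: rest) := perm_append_singleton a (c :: rest)
      rw [hperm.count_eq]
      exact List.count_eq_one_of_mem hnd (hmem x)


lemma getElem_idx_congr {α : Type*} {l : List α} {i j : ℕ} (h : i = j) (hj : j < l.length) :
    l[i]'(h ▸ hj) = l[j]'hj := by subst h; rfl

lemma getLast?_take_eq {α : Type*} (l : List α) (k : ℕ) (h : k < l.length) :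
    (l.take (k+1)).getLast? = some (l[k]'h) := by
  have hlen : (l.take (k+1)).length = k+1 := by simp [List.length_take]; omega
  have hne : l.take (k+1) ≠ [] := List.ne_nil_of_length_pos (by omega)
  rw [List.getLast?_eq_getLast hne, List.getLast_eq_getElem]
  congr 1
  have h1 : (l.take (k+1))[(l.take (k+1)).length - 1]'(by omega) = (l.take (k+1))[k]'(by omega) :=
    getElem_idx_congr (by omega) (by omega)
  rw [h1, List.getElem_take]

lemma head?_drop_eq {α : Type*} (l : List α) (k : ℕ) (h : k < l.length) :
    (l.drop k).head? = some (l[k]'h) := by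
  have hne : l.drop k ≠ [] := List.ne_nil_of_length_pos (by simp; omega)
  rw [List.head?_eq_head hne, List.head_eq_getElem]
  have h1 : (l.drop k)[0]'(by simp; omega) = l[k + 0]'(by omega) := List.getElem_drop
  simpa using h1

lemma getLast?_drop_eq {α : Type*} (l : List α) (k : ℕ) (h : k < l.length) :
    (l.drop k).getLast? = some (l[l.length - 1]'(by omega)) := by
  have hne : l.drop k ≠ [] := List.ne_nil_of_length_pos (by simp; omega)
  rw [List.getLast?_eq_getLast hne, List.getLast_eq_getElem]
  congr 1
  have h1 : (l.drop k)[(l.drop k).length - 1]'(by simp; omega) = (l.drop k)[l.length - k - 1]'(by simp; omega) :=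
    getElem_idx_congr (by simp) (by simp; omega)
  rw [h1, List.getElem_drop]
  exact getElem_idx_congr (by omega) (by omega)

lemma closure {G : SimpleGraph V} [DecidableRel G.Adj] (hn : 3 ≤ Fintype.card V)
    {u v : V} (p : G.Walk u v) (hp : p.IsPath) (hall : ∀ x : V, x ∈ p.support)
    (hsum : Fintype.card V ≤ G.degree u + G.degree v) :
    ∃ (a : V) (c : G.Walk a a), c.IsHamiltonianCycle := by
  set n := Fintype.card V with hndef
  have hham : p.IsHamiltonian := hp.isHamiltonian_of_mem hall
  set L := p.support with hLdef
  have hLlen : L.length = n := by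
    rw [hLdef, p.length_support, hham.length_eq]; omega
  have hnd : L.Nodup := hp.support_nodup
  have hchain : L.Chain' G.Adj := p.isChain_adj_support
  set f : ℕ → V := fun i => L.getD i u with hf
  have hgetD : ∀ i (h : i < n), f i = L[i]'(by omega) := by
    intro i h; rw [hf]; exact List.getD_eq_getElem L u (by omega)
  have hLne : L ≠ [] := by intro h; rw [h] at hLlen; simp at hLlen; omega
  have hf0 : f 0 = u := by
    rw [hgetD 0 (by omega)]
    have h2 : L = u :: L.tail := p.support_eq_cons
    rw [List.getElem_of_eq h2 (by omega)]
    simp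
  have hfn : f (n - 1) = v := by
    have h1 : L.getLast hLne = v := p.getLast_support
    rw [List.getLast_eq_getElem] at h1
    rw [hgetD _ (by omega)]
    exact (getElem_idx_congr (l := L) (by omega : n - 1 = L.length - 1) (by omega)).trans h1
  have hadj : ∀ i, i < n - 1 → G.Adj (f i) (f (i + 1)) := by
    intro i hi
    rw [hgetD i (by omega), hgetD (i+1) (by omega)]
    have := List.isChain_iff_getElem.mp hchain i (by omega)
    simpa using this
  have hinj : ∀ i, i < n → ∀ j, j < n → f i = f j → i = j := by
    intro i hi j hj hij
    rw [hgetD i hi, hgetD j hj] at hij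
    have := List.nodup_iff_injective_get.mp hnd (a₁ := ⟨i, by omega⟩) (a₂ := ⟨j, by omega⟩)
      (by simpa [List.get_eq_getElem] using hij)
    simpa using this
  have hsurj : ∀ w : V, ∃ i, i < n ∧ f i = w := by
    intro w
    obtain ⟨i, hi, hw⟩ := List.getElem_of_mem (hall w)
    exact ⟨i, by omega, by rw [hgetD i (by omega)]; exact hw⟩
  -- the two finsets
  set S : Finset ℕ := (Finset.range (n-1)).filter (fun i => G.Adj u (f (i+1))) with hS
  set T : Finset ℕ := (Finset.range (n-1)).filter (fun i => G.Adj v (f i)) with hT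
  have hScard : S.card = G.degree u := by
    rw [← card_neighborFinset_eq_degree]
    apply Finset.card_bij (fun i _ => f (i+1))
    · intro i hi
      rw [hS, Finset.mem_filter, Finset.mem_range] at hi
      rw [mem_neighborFinset]; exact hi.2
    · intro i hi j hj hij
      rw [hS, Finset.mem_filter, Finset.mem_range] at hi hj
      have := hinj (i+1) (by omega) (j+1) (by omega) hij
      omega
    · intro w hw
      rw [mem_neighborFinset] at hw
      obtain ⟨j, hj, rfl⟩ := hsurj w
      have hj0 : j ≠ 0 := by
        intro h; rw [h, hf0] at hw; exact hw.ne rfl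
      have hjn : j - 1 < n - 1 := by omega
      refine ⟨j - 1, ?_, by congr 1; omega⟩
      rw [hS, Finset.mem_filter, Finset.mem_range]
      constructor
      · omega
      · rw [show j - 1 + 1 = j by omega]; exact hw
  have hTcard : T.card = G.degree v := by
    rw [← card_neighborFinset_eq_degree]
    apply Finset.card_bij (fun i _ => f i)
    · intro i hi
      rw [hT, Finset.mem_filter, Finset.mem_range] at hi
      rw [mem_neighborFinset]; exact hi.2
    · intro i hi j hj hij
      rw [hT, Finset.mem_filter, Finset.mem_range] at hi hj
      exact hinj i (by omega) j (by omega) hij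
    · intro w hw
      rw [mem_neighborFinset] at hw
      obtain ⟨j, hj, rfl⟩ := hsurj w
      have hjn : j ≠ n - 1 := by
        intro h; rw [h, hfn] at hw; exact hw.ne rfl
      refine ⟨j, ?_, rfl⟩
      rw [hT, Finset.mem_filter, Finset.mem_range]
      exact ⟨by omega, hw⟩
  -- intersection nonempty
  have hinter : (S ∩ T).Nonempty := by
    rw [← Finset.card_pos]
    have h1 : (S ∪ T).card ≤ n - 1 := by
      have : S ∪ T ⊆ Finset.range (n-1) := by
        rw [hS, hT]
        exact Finset.union_subset (Finset.filter_subset _ _) (Finset.filter_subset _ _)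
      simpa using Finset.card_le_card this
    have h2 := Finset.card_union_add_card_inter S T
    omega
  obtain ⟨i, hiST⟩ := hinter
  rw [Finset.mem_inter, hS, hT, Finset.mem_filter, Finset.mem_filter, Finset.mem_range] at hiST
  obtain ⟨⟨hi, hSadj⟩, -, hTadj⟩ := hiST
  -- list index helpers are proven as standalone lemmas (above in final file)
  have hLlen' : L.length = n := hLlen
  -- the two crossing edges
  -- build the cycle list C = A ++ B.reverse
  have hCperm : (L.take (i+1) ++ (L.drop (i+1)).reverse).Perm L := by
    conv_rhs => rw [← List.take_append_drop (i+1) L]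
    exact ((L.drop (i+1)).reverse_perm).append_left _
  have h2 : L.take (i+1) = u :: (L.tail.take i) := by
    obtain ⟨t, ht⟩ : ∃ t, L = u :: t := ⟨L.tail, p.support_eq_cons⟩
    rw [ht]; simp
  have hAlast : (L.take (i+1)).getLast? = some (f i) := by
    rw [getLast?_take_eq L i (by omega), hgetD i (by omega)]
  have hBrevhead : ((L.drop (i+1)).reverse).head? = some v := by
    rw [List.head?_reverse, getLast?_drop_eq L (i+1) (by omega)]
    exact congrArg some ((getElem_idx_congr (by omega) (by omega)).trans ((hgetD (n-1) (by omega)).symm.trans hfn))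
  have hBrevlast : ((L.drop (i+1)).reverse).getLast? = some (f (i+1)) := by
    rw [List.getLast?_reverse, head?_drop_eq L (i+1) (by omega), hgetD (i+1) (by omega)]
  have hBrevne : (L.drop (i+1)).reverse ≠ [] := by
    apply List.ne_nil_of_length_pos
    simp
    omega
  have hchainC : List.Chain' G.Adj ((L.take (i+1) ++ (L.drop (i+1)).reverse) ++ [u]) := by
    refine List.isChain_append.mpr ⟨?_, by simp, ?_⟩
    · refine List.isChain_append.mpr ⟨hchain.take _, ?_, ?_⟩
      · rw [List.isChain_reverse]
        exact (hchain.drop (i+1)).imp (fun a b hab => hab.symm)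
      · intro x hx y hy
        rw [hAlast] at hx
        rw [hBrevhead] at hy
        obtain rfl : f i = x := by simpa using hx
        obtain rfl : v = y := by simpa using hy
        exact hTadj.symm
    · intro x hx y hy
      rw [List.getLast?_append_of_ne_nil _ hBrevne, hBrevlast] at hx
      obtain rfl : f (i+1) = x := by simpa using hx
      obtain rfl : u = y := by simpa using hy
      exact hSadj.symm
  have hCD : L.take (i+1) ++ (L.drop (i+1)).reverse
      = u :: (L.tail.take i ++ (L.drop (i+1)).reverse) := by
    rw [h2]; simp
  have hchainD : List.Chain G.Adj u ((L.tail.take i ++ (L.drop (i+1)).reverse) ++ [u]) := by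
    have h3 : List.Chain' G.Adj (u :: ((L.tail.take i ++ (L.drop (i+1)).reverse) ++ [u])) := by
      rw [hCD] at hchainC
      simpa using hchainC
    exact h3
  have hCnodup : (u :: (L.tail.take i ++ (L.drop (i+1)).reverse)).Nodup := by
    rw [← hCD]
    exact hCperm.nodup_iff.mpr hnd
  have hClen : (L.tail.take i ++ (L.drop (i+1)).reverse).length = n - 1 := by
    have := hCperm.length_eq
    rw [hCD] at this
    simp only [List.length_cons] at this
    omega
  have hCmem : ∀ x : V, x ∈ u :: (L.tail.take i ++ (L.drop (i+1)).reverse) := by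
    intro x
    rw [← hCD]
    exact hCperm.mem_iff.mpr (hall x)
  exact ⟨u, mkWalk G u u _ hchainD,
    mkWalk_isHamiltonianCycle hchainD hCnodup (by omega) hCmem⟩

lemma degree_mono {G H : SimpleGraph V} [DecidableRel G.Adj] [DecidableRel H.Adj]
    (h : G ≤ H) (u : V) : G.degree u ≤ H.degree u := by
  rw [← card_neighborFinset_eq_degree, ← card_neighborFinset_eq_degree]
  apply Finset.card_le_card
  intro w hw
  rw [mem_neighborFinset] at hw ⊢
  exact h hw

lemma hamCycle_count {a : V} {G : SimpleGraph V} {c : G.Walk a a}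
    (hc : c.IsHamiltonianCycle) (x : V) : c.support.tail.count x = 1 :=
  (Walk.isHamiltonianCycle_iff_isCycle_and_support_count_tail_eq_one.mp hc).2 x

lemma hamCycle_of_cycle_count {a : V} {G : SimpleGraph V} {c : G.Walk a a}
    (hc : c.IsCycle) (h : ∀ x : V, c.support.tail.count x = 1) : c.IsHamiltonianCycle :=
  Walk.isHamiltonianCycle_iff_isCycle_and_support_count_tail_eq_one.mpr ⟨hc, h⟩

lemma rotate_isHamiltonianCycle {a u : V} {G : SimpleGraph V} {c : G.Walk a a}
    (hc : c.IsHamiltonianCycle) (hu : u ∈ c.support) :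
    (c.rotate u hu).IsHamiltonianCycle := by
  apply hamCycle_of_cycle_count (hc.isCycle.rotate hu)
  intro x
  rw [((Walk.support_rotate c u hu).perm).count_eq]
  exact hamCycle_count hc x

lemma reverse_isHamiltonianCycle {a : V} {G : SimpleGraph V} {c : G.Walk a a}
    (hc : c.IsHamiltonianCycle) : c.reverse.IsHamiltonianCycle := by
  have hlen := hc.isCycle.three_le_length
  set t : List V := c.support.tail with ht
  have htne : t ≠ [] := by
    apply List.ne_nil_of_length_pos
    have := c.length_support
    rw [c.support_eq_cons] at this
    simp only [ht]
    simp at this ⊢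
    omega
  have h2 : c.support = a :: t := c.support_eq_cons
  have h3 : t.getLast? = some a := by
    have h4 : ([a] ++ t).getLast? = t.getLast? := List.getLast?_append_of_ne_nil _ htne
    rw [← h4]
    show (a :: t).getLast? = some a
    rw [← h2, List.getLast?_eq_getLast (by simp)]
    exact congrArg some c.getLast_support
  have hteq : t.dropLast ++ [a] = t := List.dropLast_append_getLast? a (by simp [h3])
  have hrevsupp : c.reverse.support.tail = t.dropLast.reverse ++ [a] := by
    rw [Walk.support_reverse, h2, ← hteq]
    simp
  have hperm : (t.dropLast.reverse ++ [a]).Perm t := by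
    refine ((perm_append_singleton a t.dropLast.reverse).trans ?_)
    refine (Perm.cons a t.dropLast.reverse_perm).trans ?_
    exact ((perm_append_singleton a t.dropLast).symm).trans (by rw [hteq])
  constructor
  · rw [Walk.isCycle_def]
    refine ⟨Walk.IsTrail.reverse c hc.isCycle.isTrail, ?_, ?_⟩
    · intro h
      have := congrArg Walk.length h
      rw [Walk.length_reverse, Walk.length_nil] at this
      omega
    · rw [hrevsupp, hperm.nodup_iff]
      exact hc.isCycle.2
  · -- tail hamiltonian: use count characterization
    have : ∀ x : V, c.reverse.support.tail.count x = 1 := by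
      intro x
      rw [hrevsupp, hperm.count_eq]
      exact hamCycle_count hc x
    exact (hamCycle_of_cycle_count (by
      rw [Walk.isCycle_def]
      refine ⟨Walk.IsTrail.reverse c hc.isCycle.isTrail, ?_, ?_⟩
      · intro h
        have := congrArg Walk.length h
        rw [Walk.length_reverse, Walk.length_nil] at this
        omega
      · rw [hrevsupp, hperm.nodup_iff]
        exact hc.isCycle.2) this).isHamiltonian_tail

lemma aux_last {G : SimpleGraph V} {u v : V} :
    ∀ {w : V} (q : G.Walk w u), q.support.Nodup → s(u,v) ∈ q.edges →
      q.getVert (q.length - 1) = v := by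
  intro w q
  induction q with
  | nil => intro _ he; simp at he
  | @cons w z _ h q' ih =>
    intro hnd he
    rw [Walk.support_cons, List.nodup_cons] at hnd
    rw [Walk.edges_cons, List.mem_cons] at he
    have hq'len : ∀ e, e ∈ q'.edges → 1 ≤ q'.length := by
      intro e hm
      by_contra hcon
      have h0 : q'.length = 0 := by omega
      have := q'.length_edges
      rw [h0] at this
      rw [List.eq_nil_of_length_eq_zero this] at hm
      simp at hm
    rcases he with heq | hmem
    · rw [Sym2.eq_iff] at heq
      rcases heq with ⟨h1, h2⟩ | ⟨h1, h2⟩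
      · exact absurd (h1 ▸ q'.end_mem_support) hnd.1
      · subst h1
        subst h2
        obtain rfl := Walk.isPath_iff_eq_nil.mp (Walk.IsPath.mk' hnd.2)
        simp
    · have h1 := ih hnd.2 hmem
      have h2 : 1 ≤ q'.length := hq'len _ hmem
      rw [Walk.length_cons]
      rw [show q'.length + 1 - 1 = q'.length by omega]
      rw [Walk.getVert_cons q' h (by omega)]
      exact h1

lemma locate {G : SimpleGraph V} {u v : V} {c : G.Walk u u} (hc : c.IsCycle)
    (he : s(u,v) ∈ c.edges) : c.getVert 1 = v ∨ c.reverse.getVert 1 = v := by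
  have hvu : v ≠ u := by
    have := c.adj_of_mem_edges he
    exact fun h => this.ne' (h ▸ rfl)
  cases c with
  | nil => simp at he
  | @cons _ x _ h q =>
    rw [Walk.edges_cons, List.mem_cons] at he
    rcases he with heq | hmem
    · left
      rw [Sym2.eq_iff] at heq
      rcases heq with ⟨-, rfl⟩ | ⟨rfl, heq2⟩
      · simp [Walk.getVert_cons_succ]
      · exact absurd heq2 hvu
    · right
      have hnd : q.support.Nodup := by
        have := hc.2
        rwa [Walk.support_cons, List.tail_cons] at this
      have h1 := aux_last q hnd hmem
      have h2 : 1 ≤ q.length := by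
        by_contra hcon
        have h0 : q.length = 0 := by omega
        have := q.length_edges
        rw [h0] at this
        rw [List.eq_nil_of_length_eq_zero this] at hmem
        simp at hmem
      rw [Walk.getVert_reverse]
      rw [Walk.length_cons]
      rw [show q.length + 1 - 1 = q.length by omega]
      rw [Walk.getVert_cons q h (by omega)]
      exact h1


lemma extract {G : SimpleGraph V} {u v : V} {c : G.Walk u u}
    (hc : c.IsHamiltonianCycle) (h1 : c.getVert 1 = v) (huv : u ≠ v) :
    ∃ (hadj : G.Adj u v) (q : G.Walk v u), q.IsPath ∧ (∀ x : V, x ∈ q.support) ∧ s(u,v) ∉ q.edges := by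
  cases c with
  | nil => exact absurd rfl hc.isCycle.ne_nil
  | @cons _ x _ h q =>
    have hx : x = v := by simpa [Walk.getVert_cons_succ] using h1
    subst hx
    refine ⟨h, q, ?_, ?_, ?_⟩
    · apply Walk.IsPath.mk'
      have h2 := hc.isCycle.2
      rwa [Walk.support_cons, List.tail_cons] at h2
    · intro y
      have hcount := hamCycle_count hc y
      rw [Walk.support_cons, List.tail_cons] at hcount
      exact List.count_pos_iff.mp (by omega)
    · have htrail := hc.isCycle.isTrail
      have h3 := htrail.edges_nodup
      rw [Walk.edges_cons] at h3
      exact (List.nodup_cons.mp h3).1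

lemma complete_case (G : SimpleGraph V) [DecidableRel G.Adj] (hn : 3 ≤ Fintype.card V)
    (hcomp : ∀ x y : V, x ≠ y → G.Adj x y) :
    ∃ (a : V) (c : G.Walk a a), c.IsHamiltonianCycle := by
  set M := (Finset.univ : Finset V).toList with hM
  have hMnd : M.Nodup := Finset.nodup_toList _
  have hMlen : M.length = Fintype.card V := by simp [hM]
  have hMmem : ∀ x : V, x ∈ M := fun x => by simp [hM]
  obtain ⟨u, rest, hMur⟩ : ∃ u rest, M = u :: rest := by
    cases hMe : M with
    | nil => rw [hMe] at hMlen; simp at hMlen; omega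
    | cons a l => exact ⟨a, l, rfl⟩
  have hrestne : rest ≠ [] := by
    intro h; rw [hMur, h] at hMlen; simp at hMlen; omega
  set v := rest.getLast hrestne with hv
  have hrest : rest.dropLast ++ [v] = rest := List.dropLast_append_getLast hrestne
  have hchain : List.Chain G.Adj u (rest.dropLast ++ [v]) := by
    rw [hrest]
    have h1 : M.Chain' (· ≠ ·) := List.Pairwise.isChain hMnd
    have h2 : M.Chain' G.Adj := h1.imp (fun a b hab => hcomp a b hab)
    rw [hMur] at h2
    exact h2
  have hsupp : (mkWalk G u v rest.dropLast hchain).support = u :: rest := by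
    rw [mkWalk_support, hrest]
  apply closure hn (mkWalk G u v rest.dropLast hchain)
  · apply Walk.IsPath.mk'
    rw [hsupp, ← hMur]
    exact hMnd
  · intro x
    rw [hsupp, ← hMur]
    exact hMmem x
  · have hd : ∀ w : V, Fintype.card V - 1 ≤ G.degree w := by
      intro w
      rw [← card_neighborFinset_eq_degree]
      have hss : Finset.univ.erase w ⊆ G.neighborFinset w := by
        intro y hy
        rw [Finset.mem_erase] at hy
        rw [mem_neighborFinset]
        exact hcomp w y (Ne.symm hy.1)
      have := Finset.card_le_card hss
      rw [Finset.card_erase_of_mem (Finset.mem_univ w), Finset.card_univ] at this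
      omega
    have h1 := hd u
    have h2 := hd v
    omega

end OreProof

theorem ore_hamiltonian {V : Type*} [Fintype V] [DecidableEq V]
    (G : SimpleGraph V) [DecidableRel G.Adj]
    (hn : 3 ≤ Fintype.card V)
    (hdeg : ∀ u v : V, u ≠ v → ¬ G.Adj u v →
      Fintype.card V ≤ G.degree u + G.degree v) :
    G.IsHamiltonian := by
  open OreProof in
  suffices H : ∀ (k : ℕ) (G' : SimpleGraph V) [inst : DecidableRel G'.Adj],
      (Finset.univ.filter (fun p : V × V => p.1 ≠ p.2 ∧ ¬ G'.Adj p.1 p.2)).card ≤ k →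
      (∀ u v : V, u ≠ v → ¬ G'.Adj u v → Fintype.card V ≤ G'.degree u + G'.degree v) →
      G'.IsHamiltonian by
    exact H _ G le_rfl hdeg
  intro k
  induction k with
  | zero =>
    intro G' inst hcard hdeg'
    have hcomp : ∀ x y : V, x ≠ y → G'.Adj x y := by
      intro x y hxy
      by_contra hadj
      have hmem : (x, y) ∈ Finset.univ.filter (fun p : V × V => p.1 ≠ p.2 ∧ ¬ G'.Adj p.1 p.2) := by
        simp [hxy, hadj]
      have hpos := Finset.card_pos.mpr ⟨_, hmem⟩
      omega
    exact fun _ => OreProof.complete_case G' hn hcomp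
  | succ k ih =>
    intro G' inst hcard hdeg'
    by_cases hcomp : ∀ x y : V, x ≠ y → G'.Adj x y
    · exact fun _ => OreProof.complete_case G' hn hcomp
    · push_neg at hcomp
      obtain ⟨u, v, huv, hnadj⟩ := hcomp
      have hle : G' ≤ G' ⊔ SimpleGraph.edge u v := le_sup_left
      have hadj'' : (G' ⊔ SimpleGraph.edge u v).Adj u v :=
        (SimpleGraph.sup_adj _ _ _ _).mpr (Or.inr (by rw [SimpleGraph.edge_adj]; exact ⟨Or.inl ⟨rfl, rfl⟩, huv⟩))
      have hcard'' : (Finset.univ.filter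
          (fun p : V × V => p.1 ≠ p.2 ∧ ¬ (G' ⊔ SimpleGraph.edge u v).Adj p.1 p.2)).card ≤ k := by
        have hsub : (Finset.univ.filter
            (fun p : V × V => p.1 ≠ p.2 ∧ ¬ (G' ⊔ SimpleGraph.edge u v).Adj p.1 p.2)) ⊆
            (Finset.univ.filter (fun p : V × V => p.1 ≠ p.2 ∧ ¬ G'.Adj p.1 p.2)) := by
          intro p hp
          rw [Finset.mem_filter] at hp ⊢
          exact ⟨hp.1, hp.2.1, fun h => hp.2.2 (hle h)⟩
        have hmem' : (u, v) ∈ Finset.univ.filter (fun p : V × V => p.1 ≠ p.2 ∧ ¬ G'.Adj p.1 p.2) := by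
          simp [huv, hnadj]
        have hnm'' : (u, v) ∉ Finset.univ.filter
            (fun p : V × V => p.1 ≠ p.2 ∧ ¬ (G' ⊔ SimpleGraph.edge u v).Adj p.1 p.2) := by
          intro hmem2
          rw [Finset.mem_filter] at hmem2
          exact hmem2.2.2 hadj''
        have := Finset.card_lt_card ((Finset.ssubset_iff_of_subset hsub).mpr
          ⟨(u, v), hmem', hnm''⟩)
        omega
      have hdeg'' : ∀ x y : V, x ≠ y → ¬ (G' ⊔ SimpleGraph.edge u v).Adj x y →
          Fintype.card V ≤ (G' ⊔ SimpleGraph.edge u v).degree x + (G' ⊔ SimpleGraph.edge u v).degree y := by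
        intro x y hxy hna
        have hna' : ¬ G'.Adj x y := fun h => hna (hle h)
        have h0 := hdeg' x y hxy hna'
        have d1 := OreProof.degree_mono hle x
        have d2 := OreProof.degree_mono hle y
        omega
      obtain ⟨a, c, hc⟩ := ih (G' ⊔ SimpleGraph.edge u v) hcard'' hdeg'' (by omega)
      intro hne1
      by_cases he : s(u,v) ∈ c.edges
      · have hu : u ∈ c.support := hc.mem_support u
        have hc2 := OreProof.rotate_isHamiltonianCycle hc hu
        have he2 : s(u,v) ∈ (c.rotate u hu).edges := by
          rw [(SimpleGraph.Walk.rotate_edges c u hu).perm.mem_iff]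
          exact he
        have hloc := OreProof.locate hc2.isCycle he2
        obtain ⟨c₃, hc₃, h1₃⟩ : ∃ c₃ : (G' ⊔ SimpleGraph.edge u v).Walk u u,
            c₃.IsHamiltonianCycle ∧ c₃.getVert 1 = v := by
          rcases hloc with h | h
          · exact ⟨c.rotate u hu, hc2, h⟩
          · exact ⟨(c.rotate u hu).reverse, OreProof.reverse_isHamiltonianCycle hc2, h⟩
        obtain ⟨hadj, q, hq, hqmem, hqe⟩ := OreProof.extract hc₃ h1₃ huv
        have hsubq : ∀ e ∈ q.edges, e ∈ G'.edgeSet := by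
          intro e hee
          have h2 : e ∈ (G' ⊔ SimpleGraph.edge u v).edgeSet := q.edges_subset_edgeSet hee
          rw [SimpleGraph.edgeSet_sup] at h2
          rcases h2 with h2 | h2
          · exact h2
          · rw [SimpleGraph.edge_edgeSet_of_ne huv, Set.mem_singleton_iff] at h2
            exact absurd (h2 ▸ hee) hqe
        have hq'path : ((q.transfer G' hsubq).reverse).IsPath := (hq.transfer hsubq).reverse
        apply OreProof.closure hn (q.transfer G' hsubq).reverse hq'path
        · intro x
          rw [SimpleGraph.Walk.support_reverse, List.mem_reverse, SimpleGraph.Walk.support_transfer]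
          exact hqmem x
        · exact hdeg' u v huv hnadj
      · have hsubc : ∀ e ∈ c.edges, e ∈ G'.edgeSet := by
          intro e hee
          have h2 : e ∈ (G' ⊔ SimpleGraph.edge u v).edgeSet := c.edges_subset_edgeSet hee
          rw [SimpleGraph.edgeSet_sup] at h2
          rcases h2 with h2 | h2
          · exact h2
          · rw [SimpleGraph.edge_edgeSet_of_ne huv, Set.mem_singleton_iff] at h2
            exact absurd (h2 ▸ hee) he
        refine ⟨a, c.transfer G' hsubc, ?_⟩
        apply OreProof.hamCycle_of_cycle_count (hc.isCycle.transfer hsubc)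
        intro x
        rw [SimpleGraph.Walk.support_transfer]
        exact OreProof.hamCycle_count hc x
end

section
/- Let G be a connected simple graph and let z₁, z₂, z₃ be three distinct vertices of G. Then G contains an induced subgraph that is a generalized claw connecting z₁, z₂, z₃ or a generalized net connecting z₁, z₂, z₃. -/
/-- `G` contains an induced generalized claw connecting `z₁, z₂, z₃`:
three paths from a common origin `x` to `z₁, z₂, z₃`, pairwise sharing only `x`,
whose union is an induced subgraph of `G`. -/
def HasInducedGeneralizedClaw {V : Type*} (G : SimpleGraph V) (z₁ z₂ z₃ : V) : Prop :=
  ∃ (x : V) (Q₁ : G.Walk x z₁) (Q₂ : G.Walk x z₂) (Q₃ : G.Walk x z₃),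
    Q₁.IsPath ∧ Q₂.IsPath ∧ Q₃.IsPath ∧
    (∀ y, y ∈ Q₁.support → y ∈ Q₂.support → y = x) ∧
    (∀ y, y ∈ Q₁.support → y ∈ Q₃.support → y = x) ∧
    (∀ y, y ∈ Q₂.support → y ∈ Q₃.support → y = x) ∧
    (∀ a b : V, (a ∈ Q₁.support ∨ a ∈ Q₂.support ∨ a ∈ Q₃.support) →
      (b ∈ Q₁.support ∨ b ∈ Q₂.support ∨ b ∈ Q₃.support) →
      (G.Adj a b ↔ s(a, b) ∈ Q₁.edges ∨ s(a, b) ∈ Q₂.edges ∨ s(a, b) ∈ Q₃.edges))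

/-- `G` contains an induced generalized net connecting `z₁, z₂, z₃`:
a triangle `x₁x₂x₃` together with three pairwise disjoint paths `Qᵢ` from `xᵢ` to `zᵢ`,
whose union is an induced subgraph of `G`. -/
def HasInducedGeneralizedNet {V : Type*} (G : SimpleGraph V) (z₁ z₂ z₃ : V) : Prop :=
  ∃ (x₁ x₂ x₃ : V) (Q₁ : G.Walk x₁ z₁) (Q₂ : G.Walk x₂ z₂) (Q₃ : G.Walk x₃ z₃),
    G.Adj x₁ x₂ ∧ G.Adj x₁ x₃ ∧ G.Adj x₂ x₃ ∧
    Q₁.IsPath ∧ Q₂.IsPath ∧ Q₃.IsPath ∧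
    (∀ y, y ∈ Q₁.support → y ∉ Q₂.support) ∧
    (∀ y, y ∈ Q₁.support → y ∉ Q₃.support) ∧
    (∀ y, y ∈ Q₂.support → y ∉ Q₃.support) ∧
    (∀ a b : V, (a ∈ Q₁.support ∨ a ∈ Q₂.support ∨ a ∈ Q₃.support) →
      (b ∈ Q₁.support ∨ b ∈ Q₂.support ∨ b ∈ Q₃.support) →
      (G.Adj a b ↔ s(a, b) ∈ Q₁.edges ∨ s(a, b) ∈ Q₂.edges ∨ s(a, b) ∈ Q₃.edges ∨
        s(a, b) = s(x₁, x₂) ∨ s(a, b) = s(x₁, x₃) ∨ s(a, b) = s(x₂, x₃)))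


open SimpleGraph

namespace ClawNet

variable {V : Type*} {G : SimpleGraph V}

lemma eq_of_length_zero {u v : V} (w : G.Walk u v) (h : w.length = 0) : u = v := by
  cases w with
  | nil => rfl
  | cons e p => simp at h

lemma edge_of_length_one {u v : V} (w : G.Walk u v) (h : w.length = 1) : s(u, v) ∈ w.edges := by
  cases w with
  | nil => simp at h
  | cons e p =>
    have hp : p.length = 0 := by simpa using h
    have := eq_of_length_zero p hp
    subst this
    simp

lemma nil_of_length_zero {a : V} (w : G.Walk a a) (h : w.length = 0) : w = Walk.nil := by
  cases w with
  | nil => rfl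
  | cons e p => simp at h

lemma loop_path_nil {a : V} (w : G.Walk a a) (h : w.IsPath) : w = Walk.nil := by
  cases w with
  | nil => rfl
  | cons e p =>
    exfalso
    rw [Walk.cons_isPath_iff] at h
    exact h.2 p.end_mem_support

lemma walk_cons_of_ne {x y : V} (w : G.Walk x y) (h : x ≠ y) :
    ∃ (u : V) (e : G.Adj x u) (q : G.Walk u y), w = Walk.cons e q := by
  cases w with
  | nil => exact absurd rfl h
  | cons e q => exact ⟨_, e, q, rfl⟩

/-- Junction lemma: two parts of a path share only the junction vertex. -/
lemma mem_both_of_append {x a y : V} {w₁ : G.Walk x a} {w₂ : G.Walk a y}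
    (hp : (w₁.append w₂).IsPath) {c : V} (h1 : c ∈ w₁.support) (h2 : c ∈ w₂.support) : c = a := by
  have hnd := hp.support_nodup
  rw [Walk.support_append, List.nodup_append] at hnd
  rw [w₂.support_eq_cons] at h2
  rcases List.mem_cons.mp h2 with h2 | h2
  · exact h2
  · exact absurd rfl (hnd.2.2 c h1 c h2)

/-- First vertex on a walk satisfying a predicate. -/
lemma exists_first (pred : V → Prop) {x y : V} (w : G.Walk x y)
    (h : ∃ v ∈ w.support, pred v) :
    ∃ (a : V) (w₁ : G.Walk x a) (w₂ : G.Walk a y),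
      w = w₁.append w₂ ∧ pred a ∧ ∀ v ∈ w₁.support, pred v → v = a := by
  classical
  induction w with
  | nil =>
    obtain ⟨v, hv, hpv⟩ := h
    simp only [Walk.support_nil, List.mem_singleton] at hv
    subst hv
    exact ⟨v, Walk.nil, Walk.nil, rfl, hpv, by simp⟩
  | @cons x v y e p ih =>
    by_cases hx : pred x
    · exact ⟨x, Walk.nil, Walk.cons e p, rfl, hx, by simp⟩
    · have h' : ∃ v ∈ p.support, pred v := by
        obtain ⟨v', hv', hpv'⟩ := h
        rw [Walk.support_cons, List.mem_cons] at hv'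
        rcases hv' with rfl | hv'
        · exact absurd hpv' hx
        · exact ⟨v', hv', hpv'⟩
      obtain ⟨a, w₁, w₂, heq, ha, hfirst⟩ := ih h'
      refine ⟨a, Walk.cons e w₁, w₂, by rw [Walk.cons_append, heq], ha, ?_⟩
      intro v hv hpv
      rw [Walk.support_cons, List.mem_cons] at hv
      rcases hv with rfl | hv
      · exact absurd hpv hx
      · exact hfirst v hv hpv

/-- Last vertex on a walk satisfying a predicate. -/
lemma exists_last (pred : V → Prop) {x y : V} (w : G.Walk x y)
    (h : ∃ v ∈ w.support, pred v) :
    ∃ (b : V) (w₁ : G.Walk x b) (w₂ : G.Walk b y),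
      w = w₁.append w₂ ∧ pred b ∧ ∀ v ∈ w₂.support, pred v → v = b := by
  obtain ⟨b, r₁, r₂, heq, hb, hlast⟩ := exists_first pred w.reverse
    (by obtain ⟨v, hv, hpv⟩ := h; exact ⟨v, by simpa using hv, hpv⟩)
  refine ⟨b, r₂.reverse, r₁.reverse, ?_, hb, fun v hv hpv => hlast v (by simpa using hv) hpv⟩
  have h2 : w.reverse.reverse = (r₁.append r₂).reverse := by rw [heq]
  rw [Walk.reverse_reverse, Walk.reverse_append] at h2
  exact h2

lemma exists_min_walk {x y : V} (h : G.Reachable x y) :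
    ∃ w : G.Walk x y, w.IsPath ∧ ∀ w' : G.Walk x y, w.length ≤ w'.length := by
  classical
  let S : Set ℕ := {n | ∃ w : G.Walk x y, w.length = n}
  have hS : S.Nonempty := ⟨h.some.length, h.some, rfl⟩
  obtain ⟨w₀, hw₀⟩ := Nat.sInf_mem hS
  refine ⟨w₀.bypass, w₀.bypass_isPath, fun w' => ?_⟩
  calc w₀.bypass.length ≤ w₀.length := w₀.length_bypass_le
    _ = sInf S := hw₀
    _ ≤ w'.length := Nat.sInf_le ⟨w', rfl⟩

lemma exists_min_walk_to_set {x : V} (S : V → Prop) (hS : ∃ p, S p ∧ G.Reachable x p) :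
    ∃ (t : V), S t ∧ ∃ (w : G.Walk x t), w.IsPath ∧
      ∀ p, S p → ∀ w' : G.Walk x p, w.length ≤ w'.length := by
  classical
  let N : Set ℕ := {n | ∃ p, S p ∧ ∃ w : G.Walk x p, w.length = n}
  have hN : N.Nonempty := by
    obtain ⟨p, hp, hr⟩ := hS
    exact ⟨hr.some.length, p, hp, hr.some, rfl⟩
  obtain ⟨t, ht, w₀, hw₀⟩ := Nat.sInf_mem hN
  refine ⟨t, ht, w₀.bypass, w₀.bypass_isPath, fun p hp w' => ?_⟩
  calc w₀.bypass.length ≤ w₀.length := w₀.length_bypass_le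
    _ = sInf N := hw₀
    _ ≤ w'.length := Nat.sInf_le ⟨p, hp, w', rfl⟩

lemma min_walk_core {x y a : V} (w₁ : G.Walk x a) (w₂ : G.Walk a y)
    (hmin : ∀ w' : G.Walk x y, (w₁.append w₂).length ≤ w'.length)
    {b : V} (hb : b ∈ w₂.support) (hab : G.Adj a b) :
    s(a, b) ∈ (w₁.append w₂).edges := by
  obtain ⟨w₃, w₄, rfl⟩ := Walk.mem_support_iff_exists_append.mp hb
  have hle := hmin (w₁.append (Walk.cons hab w₄))
  simp only [Walk.length_append, Walk.length_cons] at hle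
  have h3 : w₃.length ≤ 1 := by omega
  interval_cases h : w₃.length
  · exact absurd (eq_of_length_zero w₃ h) hab.ne
  · have := edge_of_length_one w₃ h
    rw [Walk.edges_append, Walk.edges_append]
    exact List.mem_append_right _ (List.mem_append_left _ this)

lemma min_walk_induced {x y : V} {w : G.Walk x y}
    (hmin : ∀ w' : G.Walk x y, w.length ≤ w'.length)
    {a b : V} (ha : a ∈ w.support) (hb : b ∈ w.support) (hab : G.Adj a b) :
    s(a, b) ∈ w.edges := by
  obtain ⟨w₁, w₂, rfl⟩ := Walk.mem_support_iff_exists_append.mp ha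
  rw [Walk.mem_support_append_iff] at hb
  rcases hb with hb | hb
  · obtain ⟨v₁, v₂, rfl⟩ := Walk.mem_support_iff_exists_append.mp hb
    have ha2 : a ∈ (v₂.append w₂).support := by
      rw [Walk.mem_support_append_iff]
      exact Or.inl v₂.end_mem_support
    have hmin' : ∀ w' : G.Walk x y, (v₁.append (v₂.append w₂)).length ≤ w'.length := by
      intro w'
      have := hmin w'
      simpa [Walk.length_append, Nat.add_assoc] using this
    have := min_walk_core v₁ (v₂.append w₂) hmin' ha2 hab.symm
    rw [Sym2.eq_swap] at this
    simpa [Walk.edges_append, List.mem_append] using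
      (by simpa [Walk.edges_append, List.mem_append] using this :
        s(a,b) ∈ v₁.edges ∨ s(a,b) ∈ v₂.edges ∨ s(a,b) ∈ w₂.edges)
  · exact min_walk_core w₁ w₂ hmin hb hab

end ClawNet

open SimpleGraph in
theorem induced_generalized_claw_or_net {V : Type*} (G : SimpleGraph V)
    (hconn : G.Connected) (z₁ z₂ z₃ : V)
    (h12 : z₁ ≠ z₂) (h13 : z₁ ≠ z₃) (h23 : z₂ ≠ z₃) :
    HasInducedGeneralizedClaw G z₁ z₂ z₃ ∨ HasInducedGeneralizedNet G z₁ z₂ z₃ := by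
  classical
  obtain ⟨P, hPp, hPmin⟩ := ClawNet.exists_min_walk (hconn z₁ z₂)
  have hPind : ∀ a b : V, a ∈ P.support → b ∈ P.support → G.Adj a b → s(a, b) ∈ P.edges :=
    fun a b ha hb hab => ClawNet.min_walk_induced hPmin ha hb hab
  by_cases hz₃ : z₃ ∈ P.support
  · -- z₃ lies on P : claw centered at z₃
    left
    obtain ⟨C₁, C₂, rfl⟩ := SimpleGraph.Walk.mem_support_iff_exists_append.mp hz₃
    refine ⟨z₃, C₁.reverse, C₂, Walk.nil, hPp.of_append_left.reverse, hPp.of_append_right,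
      Walk.IsPath.nil, ?_, ?_, ?_, ?_⟩
    · intro y hy1 hy2
      exact ClawNet.mem_both_of_append hPp (by simpa using hy1) hy2
    · intro y _ hy2; simpa using hy2
    · intro y _ hy2; simpa using hy2
    · intro α β hα hβ
      have memP : ∀ γ, (γ ∈ C₁.reverse.support ∨ γ ∈ C₂.support ∨ γ ∈ (Walk.nil : G.Walk z₃ z₃).support) →
          γ ∈ (C₁.append C₂).support := by
        intro γ h
        rw [Walk.mem_support_append_iff]
        rcases h with h | h | h
        · left; simpa using h
        · right; exact h
        · left; simp at h; subst h; exact C₁.end_mem_support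
      constructor
      · intro hadj
        have := hPind α β (memP α hα) (memP β hβ) hadj
        rw [Walk.edges_append, List.mem_append] at this
        rcases this with h | h
        · left; rw [Walk.edges_reverse, List.mem_reverse]; exact h
        · right; left; exact h
      · intro h
        rcases h with h | h | h
        · exact Walk.adj_of_mem_edges _ h
        · exact Walk.adj_of_mem_edges _ h
        · simp at h
  · -- z₃ not on P
    have hPne : ∃ p, p ∈ P.support ∧ G.Reachable z₃ p := ⟨z₁, P.start_mem_support, hconn z₃ z₁⟩
    obtain ⟨t, htP, R, hRp, hRmin⟩ := ClawNet.exists_min_walk_to_set (· ∈ P.support) hPne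
    have hRind : ∀ a b : V, a ∈ R.support → b ∈ R.support → G.Adj a b → s(a, b) ∈ R.edges :=
      fun a b ha hb hab => ClawNet.min_walk_induced (fun w' => hRmin t htP w') ha hb hab
    have hRP : ∀ y, y ∈ R.support → y ∈ P.support → y = t := by
      intro y hy hyP
      obtain ⟨R₁, R₂, rfl⟩ := SimpleGraph.Walk.mem_support_iff_exists_append.mp hy
      have hle := hRmin y hyP R₁
      rw [Walk.length_append] at hle
      exact ClawNet.eq_of_length_zero R₂ (by omega)
    have hz₃t : z₃ ≠ t := fun h => hz₃ (h ▸ htP)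
    obtain ⟨u, e_tu, Q, hRrev⟩ := ClawNet.walk_cons_of_ne R.reverse hz₃t.symm
    have hconsP : (Walk.cons e_tu Q).IsPath := hRrev ▸ hRp.reverse
    rw [Walk.cons_isPath_iff] at hconsP
    obtain ⟨hQp, htQ⟩ := hconsP
    have hRsupp : ∀ y, y ∈ R.support ↔ (y = t ∨ y ∈ Q.support) := by
      intro y
      rw [← List.mem_reverse, ← Walk.support_reverse, hRrev, Walk.support_cons, List.mem_cons]
    have hRedges : ∀ e, e ∈ R.edges ↔ (e = s(t, u) ∨ e ∈ Q.edges) := by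
      intro e
      rw [← List.mem_reverse, ← Walk.edges_reverse, hRrev, Walk.edges_cons, List.mem_cons]
    have hQP : ∀ y, y ∈ Q.support → y ∉ P.support := by
      intro y hy hyP
      exact htQ ((hRP y ((hRsupp y).mpr (Or.inr hy)) hyP) ▸ hy)
    have huQ : u ∈ Q.support := Q.start_mem_support
    have huP : u ∉ P.support := hQP u huQ
    -- any vertex of Q adjacent to P must be u
    have hNbr : ∀ y, y ∈ Q.support → ∀ p, p ∈ P.support → G.Adj y p → y = u := by
      intro y hy p hp hyp
      have hyR : y ∈ R.support := (hRsupp y).mpr (Or.inr hy)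
      obtain ⟨R₁, R₂, hRsplit⟩ := SimpleGraph.Walk.mem_support_iff_exists_append.mp hyR
      have hle := hRmin p hp (R₁.append (Walk.cons hyp Walk.nil))
      rw [hRsplit, Walk.length_append, Walk.length_append, Walk.length_cons, Walk.length_nil] at hle
      have hyt : y ≠ t := fun h => htQ (h ▸ hy)
      have h2 : R₂.length ≤ 1 := by omega
      by_cases h0 : R₂.length = 0
      · exact absurd (ClawNet.eq_of_length_zero R₂ h0) hyt
      · have h1 : R₂.length = 1 := by omega
        obtain ⟨y', e₂, R₃, rfl⟩ := ClawNet.walk_cons_of_ne R₂ hyt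
        rw [Walk.length_cons] at h1
        have h3 : t = y' := (ClawNet.eq_of_length_zero R₃ (by omega)).symm
        subst h3
        have h4 : R₃ = Walk.nil := ClawNet.nil_of_length_zero R₃ (by omega)
        subst h4
        have hs1 : R.reverse.support = t :: Q.support := by rw [hRrev, Walk.support_cons]
        have hs2 : R.reverse.support = [t, y] ++ R₁.reverse.support.tail := by
          rw [hRsplit, Walk.reverse_append, Walk.support_append]
          congr 1
        rw [hs1] at hs2
        have h5 : Q.support = y :: R₁.reverse.support.tail := by
          simpa using hs2
        have h6 := Q.support_eq_cons.symm.trans h5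
        injection h6 with h7 _
        exact h7.symm
    -- first neighbor of u along P (from z₁)
    obtain ⟨a, P₁, P₂, rfl, hua, hfirst⟩ := ClawNet.exists_first (G.Adj u) P ⟨t, htP, e_tu.symm⟩
    -- last neighbor of u along P₂ (from z₂)
    obtain ⟨b, B₁, B₂, rfl, hub, hlast⟩ :=
      ClawNet.exists_last (G.Adj u) P₂ ⟨a, P₂.start_mem_support, hua⟩
    -- shared facts about the decomposition P = P₁ ++ (B₁ ++ B₂)
    have hPp' := hPp
    have hP₂p : (B₁.append B₂).IsPath := hPp.of_append_right
    have hPsupp : ∀ y, y ∈ (P₁.append (B₁.append B₂)).support ↔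
        (y ∈ P₁.support ∨ y ∈ B₁.support ∨ y ∈ B₂.support) := by
      intro y
      rw [Walk.mem_support_append_iff, Walk.mem_support_append_iff]
    have hPedges : ∀ e, e ∈ (P₁.append (B₁.append B₂)).edges ↔
        (e ∈ P₁.edges ∨ e ∈ B₁.edges ∨ e ∈ B₂.edges) := by
      intro e
      rw [Walk.edges_append, Walk.edges_append, List.mem_append, List.mem_append]
    have hP₁P₂ : ∀ y, y ∈ P₁.support → y ∈ (B₁.append B₂).support → y = a :=
      fun y h1 h2 => ClawNet.mem_both_of_append hPp h1 h2
    have hB₁B₂ : ∀ y, y ∈ B₁.support → y ∈ B₂.support → y = b :=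
      fun y h1 h2 => ClawNet.mem_both_of_append hP₂p h1 h2
    have hP₁B₁ : ∀ y, y ∈ P₁.support → y ∈ B₁.support → y = a := fun y h1 h2 =>
      hP₁P₂ y h1 ((Walk.mem_support_append_iff _ _).mpr (Or.inl h2))
    have hP₁B₂ : ∀ y, y ∈ P₁.support → y ∈ B₂.support → y = a ∧ a = b := by
      intro y h1 h2
      have hya : y = a := hP₁P₂ y h1 ((Walk.mem_support_append_iff _ _).mpr (Or.inr h2))
      subst hya
      exact ⟨rfl, hB₁B₂ y B₁.start_mem_support h2⟩
    -- the master forward adjacency analysis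
    have master : ∀ α β, G.Adj α β →
        ((α ∈ P₁.support ∨ α ∈ B₂.support) ∨ α ∈ Q.support) →
        ((β ∈ P₁.support ∨ β ∈ B₂.support) ∨ β ∈ Q.support) →
        (s(α, β) ∈ P₁.edges ∨ s(α, β) ∈ B₂.edges ∨ s(α, β) ∈ Q.edges) ∨
        ((α = a ∧ β = b) ∨ (α = b ∧ β = a)) ∨
        ((α = a ∧ β = u) ∨ (α = u ∧ β = a)) ∨
        ((α = b ∧ β = u) ∨ (α = u ∧ β = b)) := by
      intro α β hadj hα hβ
      have toP : ∀ γ, (γ ∈ P₁.support ∨ γ ∈ B₂.support) →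
          γ ∈ (P₁.append (B₁.append B₂)).support := by
        intro γ h
        rw [hPsupp]
        rcases h with h | h
        · exact Or.inl h
        · exact Or.inr (Or.inr h)
      have nbrP : ∀ γ, (γ ∈ P₁.support ∨ γ ∈ B₂.support) → G.Adj u γ → γ = a ∨ γ = b := by
        intro γ h hadj'
        rcases h with h | h
        · exact Or.inl (hfirst γ h hadj')
        · exact Or.inr (hlast γ h hadj')
      rcases hα with hαP | hαQ
      · rcases hβ with hβP | hβQ
        · -- both on P
          have hPe := hPind α β (toP α hαP) (toP β hβP) hadj
          rw [hPedges] at hPe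
          rcases hPe with h | h | h
          · exact Or.inl (Or.inl h)
          · -- edge of B₁ : endpoints are a and b
            have hα1 : α ∈ B₁.support := Walk.fst_mem_support_of_mem_edges B₁ h
            have hβ1 : β ∈ B₁.support := Walk.snd_mem_support_of_mem_edges B₁ h
            have hαab : α = a ∨ α = b := by
              rcases hαP with h' | h'
              · exact Or.inl (hP₁B₁ α h' hα1)
              · exact Or.inr (hB₁B₂ α hα1 h')
            have hβab : β = a ∨ β = b := by
              rcases hβP with h' | h'
              · exact Or.inl (hP₁B₁ β h' hβ1)
              · exact Or.inr (hB₁B₂ β hβ1 h')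
            rcases hαab with rfl | rfl <;> rcases hβab with rfl | rfl
            · exact absurd rfl hadj.ne
            · exact Or.inr (Or.inl (Or.inl ⟨rfl, rfl⟩))
            · exact Or.inr (Or.inl (Or.inr ⟨rfl, rfl⟩))
            · exact absurd rfl hadj.ne
          · exact Or.inl (Or.inr (Or.inl h))
        · -- α on P, β on Q
          have hβu : β = u := hNbr β hβQ α (toP α hαP) hadj.symm
          subst hβu
          rcases nbrP α hαP hadj.symm with rfl | rfl
          · exact Or.inr (Or.inr (Or.inl (Or.inl ⟨rfl, rfl⟩)))
          · exact Or.inr (Or.inr (Or.inr (Or.inl ⟨rfl, rfl⟩)))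
      · rcases hβ with hβP | hβQ
        · -- α on Q, β on P
          have hαu : α = u := hNbr α hαQ β (toP β hβP) hadj
          subst hαu
          rcases nbrP β hβP hadj with rfl | rfl
          · exact Or.inr (Or.inr (Or.inl (Or.inr ⟨rfl, rfl⟩)))
          · exact Or.inr (Or.inr (Or.inr (Or.inr ⟨rfl, rfl⟩)))
        · -- both on Q
          have hRe := hRind α β ((hRsupp α).mpr (Or.inr hαQ)) ((hRsupp β).mpr (Or.inr hβQ)) hadj
          rw [hRedges] at hRe
          rcases hRe with h | h
          · exfalso
            rcases Sym2.eq_iff.mp h with ⟨rfl, rfl⟩ | ⟨rfl, rfl⟩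
            · exact htQ hαQ
            · exact htQ hβQ
          · exact Or.inl (Or.inr (Or.inr h))
    by_cases hab : a = b
    · -- CASE 1 : claw centered at a
      subst hab
      left
      have hB₁nil : B₁ = Walk.nil := ClawNet.loop_path_nil B₁ hP₂p.of_append_left
      subst hB₁nil
      have hta : t = a := by
        rcases (hPsupp t).mp htP with h | h | h
        · exact hfirst t h e_tu.symm
        · simpa using h
        · exact hlast t h e_tu.symm
      subst hta
      refine ⟨t, P₁.reverse, B₂, R.reverse, hPp.of_append_left.reverse,
        hP₂p.of_append_right, hRp.reverse, ?_, ?_, ?_, ?_⟩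
      · intro y hy1 hy2
        exact (hP₁B₂ y (by simpa using hy1) hy2).1
      · intro y hy1 hy2
        refine hRP y (by simpa using hy2) ?_
        rw [hPsupp]; left; simpa using hy1
      · intro y hy1 hy2
        refine hRP y (by simpa using hy2) ?_
        rw [hPsupp]; right; right; exact hy1
      · intro α β hα hβ
        have trans : ∀ γ, (γ ∈ P₁.reverse.support ∨ γ ∈ B₂.support ∨ γ ∈ R.reverse.support) →
            ((γ ∈ P₁.support ∨ γ ∈ B₂.support) ∨ γ ∈ Q.support) := by
          intro γ h
          rcases h with h | h | h
          · left; left; simpa using h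
          · left; right; exact h
          · rw [Walk.support_reverse, List.mem_reverse, hRsupp] at h
            rcases h with rfl | h
            · left; left; exact P₁.end_mem_support
            · right; exact h
        constructor
        · intro hadj
          rcases master α β hadj (trans α hα) (trans β hβ) with
            (h | h | h) | (⟨rfl, rfl⟩ | ⟨rfl, rfl⟩) | (⟨rfl, rfl⟩ | ⟨rfl, rfl⟩) |
              (⟨rfl, rfl⟩ | ⟨rfl, rfl⟩)
          · left; rw [Walk.edges_reverse, List.mem_reverse]; exact h
          · right; left; exact h
          · right; right; rw [Walk.edges_reverse, List.mem_reverse, hRedges]; exact Or.inr h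
          · exact absurd rfl hadj.ne
          · exact absurd rfl hadj.ne
          · right; right
            rw [Walk.edges_reverse, List.mem_reverse, hRedges]; exact Or.inl rfl
          · right; right
            rw [Walk.edges_reverse, List.mem_reverse, hRedges]
            exact Or.inl (Sym2.eq_swap)
          · right; right
            rw [Walk.edges_reverse, List.mem_reverse, hRedges]; exact Or.inl rfl
          · right; right
            rw [Walk.edges_reverse, List.mem_reverse, hRedges]
            exact Or.inl (Sym2.eq_swap)
        · intro h
          rcases h with h | h | h
          · exact Walk.adj_of_mem_edges _ h
          · exact Walk.adj_of_mem_edges _ h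
          · exact Walk.adj_of_mem_edges _ h
    · -- a ≠ b
      have hbQfalse : b ∉ Q.support := fun h => hQP b h (by rw [hPsupp]; right; right; exact B₂.start_mem_support)
      have haQfalse : a ∉ Q.support := fun h => hQP a h (by rw [hPsupp]; left; exact P₁.end_mem_support)
      have hP₁B₂' : ∀ y, y ∈ P₁.support → y ∈ B₂.support → False :=
        fun y h1 h2 => hab (hP₁B₂ y h1 h2).2
      have hP₁Q : ∀ y, y ∈ P₁.support → y ∈ Q.support → False :=
        fun y h1 h2 => hQP y h2 (by rw [hPsupp]; left; exact h1)
      have hB₂Q : ∀ y, y ∈ B₂.support → y ∈ Q.support → False :=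
        fun y h1 h2 => hQP y h2 (by rw [hPsupp]; right; right; exact h1)
      by_cases hadjab : G.Adj a b
      · -- CASE 2 : net with triangle a b u
        right
        refine ⟨a, b, u, P₁.reverse, B₂, Q, hadjab, hua.symm, hub.symm,
          hPp.of_append_left.reverse, hP₂p.of_append_right, hQp, ?_, ?_, ?_, ?_⟩
        · intro y hy1 hy2
          exact hP₁B₂' y (by simpa using hy1) hy2
        · intro y hy1 hy2
          exact hP₁Q y (by simpa using hy1) hy2
        · intro y hy1 hy2
          exact hB₂Q y hy1 hy2
        · intro α β hα hβ
          have trans : ∀ γ, (γ ∈ P₁.reverse.support ∨ γ ∈ B₂.support ∨ γ ∈ Q.support) →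
              ((γ ∈ P₁.support ∨ γ ∈ B₂.support) ∨ γ ∈ Q.support) := by
            intro γ h
            rcases h with h | h | h
            · left; left; simpa using h
            · left; right; exact h
            · right; exact h
          constructor
          · intro hadj
            rcases master α β hadj (trans α hα) (trans β hβ) with
              (h | h | h) | (⟨rfl, rfl⟩ | ⟨rfl, rfl⟩) | (⟨rfl, rfl⟩ | ⟨rfl, rfl⟩) |
                (⟨rfl, rfl⟩ | ⟨rfl, rfl⟩)
            · left; rw [Walk.edges_reverse, List.mem_reverse]; exact h
            · right; left; exact h
            · right; right; left; exact h
            · right; right; right; left; rfl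
            · right; right; right; left; exact Sym2.eq_swap
            · right; right; right; right; left; rfl
            · right; right; right; right; left; exact Sym2.eq_swap
            · right; right; right; right; right; rfl
            · right; right; right; right; right; exact Sym2.eq_swap
          · intro h
            rcases h with h | h | h | h | h | h
            · exact Walk.adj_of_mem_edges _ h
            · exact Walk.adj_of_mem_edges _ h
            · exact Walk.adj_of_mem_edges _ h
            · rcases Sym2.eq_iff.mp h with ⟨rfl, rfl⟩ | ⟨rfl, rfl⟩
              · exact hadjab
              · exact hadjab.symm
            · rcases Sym2.eq_iff.mp h with ⟨rfl, rfl⟩ | ⟨rfl, rfl⟩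
              · exact hua.symm
              · exact hua
            · rcases Sym2.eq_iff.mp h with ⟨rfl, rfl⟩ | ⟨rfl, rfl⟩
              · exact hub.symm
              · exact hub
      · -- CASE 3 : claw centered at u
        left
        refine ⟨u, Walk.cons hua P₁.reverse, Walk.cons hub B₂, Q, ?_, ?_, hQp, ?_, ?_, ?_, ?_⟩
        · rw [Walk.cons_isPath_iff]
          exact ⟨hPp.of_append_left.reverse, fun h => huP (by rw [hPsupp]; left; simpa using h)⟩
        · rw [Walk.cons_isPath_iff]
          exact ⟨hP₂p.of_append_right, fun h => huP (by rw [hPsupp]; right; right; exact h)⟩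
        · intro y hy1 hy2
          rw [Walk.support_cons, List.mem_cons] at hy1 hy2
          rcases hy1 with rfl | hy1
          · rfl
          · rcases hy2 with rfl | hy2
            · rfl
            · exact absurd hy2 (fun h => hP₁B₂' y (by simpa using hy1) h)
        · intro y hy1 hy2
          rw [Walk.support_cons, List.mem_cons] at hy1
          rcases hy1 with rfl | hy1
          · rfl
          · exact absurd hy2 (fun h => hP₁Q y (by simpa using hy1) h)
        · intro y hy1 hy2
          rw [Walk.support_cons, List.mem_cons] at hy1
          rcases hy1 with rfl | hy1
          · rfl
          · exact absurd hy2 (fun h => hB₂Q y hy1 h)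
        · intro α β hα hβ
          have trans : ∀ γ, (γ ∈ (Walk.cons hua P₁.reverse).support ∨
              γ ∈ (Walk.cons hub B₂).support ∨ γ ∈ Q.support) →
              ((γ ∈ P₁.support ∨ γ ∈ B₂.support) ∨ γ ∈ Q.support) := by
            intro γ h
            rw [Walk.support_cons, List.mem_cons, Walk.support_cons, List.mem_cons] at h
            rcases h with (rfl | h) | (rfl | h) | h
            · right; exact huQ
            · left; left; simpa using h
            · right; exact huQ
            · left; right; exact h
            · right; exact h
          constructor
          · intro hadj
            rcases master α β hadj (trans α hα) (trans β hβ) with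
              (h | h | h) | (⟨rfl, rfl⟩ | ⟨rfl, rfl⟩) | (⟨rfl, rfl⟩ | ⟨rfl, rfl⟩) |
                (⟨rfl, rfl⟩ | ⟨rfl, rfl⟩)
            · left; rw [Walk.edges_cons, List.mem_cons]; right
              rw [Walk.edges_reverse, List.mem_reverse]; exact h
            · right; left; rw [Walk.edges_cons, List.mem_cons]; right; exact h
            · right; right; exact h
            · exact absurd hadj hadjab
            · exact absurd hadj.symm hadjab
            · left; rw [Walk.edges_cons, List.mem_cons]; left; exact Sym2.eq_swap
            · left; rw [Walk.edges_cons, List.mem_cons]; left; rfl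
            · right; left; rw [Walk.edges_cons, List.mem_cons]; left; exact Sym2.eq_swap
            · right; left; rw [Walk.edges_cons, List.mem_cons]; left; rfl
          · intro h
            rcases h with h | h | h
            · exact Walk.adj_of_mem_edges _ h
            · exact Walk.adj_of_mem_edges _ h
            · exact Walk.adj_of_mem_edges _ h
end

section
/- Every graph in the class 𝒞₃ᴺᑫ is Hamiltonian: let K be a complete graph with at least 4 vertices, let b₂a₂a₃b₃ be a path of length three vertex-disjoint from K, choose three distinct vertices a₁, c₂, c₃ in K, and add the edges c₂b₂, a₁a₂, a₁a₃, c₃b₃. The resulting graph has a Hamiltonian cycle. -/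
open SimpleGraph

private lemma exists_walk_through_list {V : Type*} (G : SimpleGraph V) (K : Set V)
    (adjK : ∀ x y, x ∈ K → y ∈ K → x ≠ y → G.Adj x y) (c : V) (hc : c ∈ K) :
    ∀ (l : List V) (u : V), u ∈ K → (∀ x ∈ l, x ∈ K) → (u :: (l ++ [c])).Nodup →
      ∃ q : G.Walk u c, q.support = u :: (l ++ [c]) := by
  intro l
  induction l with
  | nil =>
    intro u hu _ hnd
    have hne : u ≠ c := by simp at hnd; tauto
    exact ⟨Walk.cons (adjK u c hu hc hne) Walk.nil, by simp⟩
  | cons x l ih =>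
    intro u hu hmem hnd
    have hnd' : (x :: (l ++ [c])).Nodup := hnd.of_cons
    have hux : u ≠ x := by simp at hnd; tauto
    obtain ⟨q, hq⟩ := ih x (hmem x (by simp)) (fun y hy => hmem y (by simp [hy])) hnd'
    exact ⟨Walk.cons (adjK u x hu (hmem x (by simp)) hux) q, by simp [hq]⟩

/-- Every graph in the class `𝒞₃ᴺᑫ` is hamiltonian: a complete graph `K` on at least
4 vertices, a path `b₂ a₂ a₃ b₃` outside `K`, three distinct vertices `a₁, c₂, c₃ ∈ K`,
with the extra edges `c₂b₂`, `a₁a₂`, `a₁a₃`, `c₃b₃`. -/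
theorem C3NQ_hamiltonian {V : Type*} [Fintype V] [DecidableEq V]
    (G : SimpleGraph V) (K : Set V) (a₁ c₂ c₃ b₂ a₂ a₃ b₃ : V)
    (hK : 4 ≤ K.ncard)
    (ha₁ : a₁ ∈ K) (hc₂ : c₂ ∈ K) (hc₃ : c₃ ∈ K)
    (h12 : a₁ ≠ c₂) (h13 : a₁ ≠ c₃) (h23 : c₂ ≠ c₃)
    (hb₂ : b₂ ∉ K) (ha₂ : a₂ ∉ K) (ha₃ : a₃ ∉ K) (hb₃ : b₃ ∉ K)
    (hdist : [b₂, a₂, a₃, b₃].Nodup)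
    (hcover : K ∪ {b₂, a₂, a₃, b₃} = Set.univ)
    (hadj : ∀ u v : V, G.Adj u v ↔ u ≠ v ∧
      ((u ∈ K ∧ v ∈ K) ∨
        s(u, v) ∈ ({s(b₂, a₂), s(a₂, a₃), s(a₃, b₃),
          s(c₂, b₂), s(a₁, a₂), s(a₁, a₃), s(c₃, b₃)} : Set (Sym2 V)))) :
    G.IsHamiltonian := by
  classical
  intro _
  -- Basic disequalities
  have hb₂a₂ : b₂ ≠ a₂ := by intro h; rw [h] at hdist; simp at hdist
  have hb₂a₃ : b₂ ≠ a₃ := by intro h; rw [h] at hdist; simp at hdist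
  have hb₂b₃ : b₂ ≠ b₃ := by intro h; rw [h] at hdist; simp at hdist
  have ha₂a₃ : a₂ ≠ a₃ := by intro h; rw [h] at hdist; simp at hdist
  have ha₂b₃ : a₂ ≠ b₃ := by intro h; rw [h] at hdist; simp at hdist
  have ha₃b₃ : a₃ ≠ b₃ := by intro h; rw [h] at hdist; simp at hdist
  have hKne : ∀ x ∈ K, x ≠ b₂ ∧ x ≠ a₂ ∧ x ≠ a₃ ∧ x ≠ b₃ := fun x hx =>
    ⟨fun h => hb₂ (h ▸ hx), fun h => ha₂ (h ▸ hx), fun h => ha₃ (h ▸ hx), fun h => hb₃ (h ▸ hx)⟩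
  obtain ⟨ha₁b₂, ha₁a₂, ha₁a₃, ha₁b₃⟩ := hKne a₁ ha₁
  obtain ⟨hc₂b₂, hc₂a₂, hc₂a₃, hc₂b₃⟩ := hKne c₂ hc₂
  obtain ⟨hc₃b₂, hc₃a₂, hc₃a₃, hc₃b₃'⟩ := hKne c₃ hc₃
  -- adjacency helpers
  have adjK : ∀ x y, x ∈ K → y ∈ K → x ≠ y → G.Adj x y := fun x y hx hy hne =>
    (hadj x y).2 ⟨hne, Or.inl ⟨hx, hy⟩⟩
  have adj_a₁a₂ : G.Adj a₁ a₂ := (hadj a₁ a₂).2 ⟨ha₁a₂, Or.inr (by simp)⟩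
  have adj_a₂b₂ : G.Adj a₂ b₂ := (hadj a₂ b₂).2 ⟨fun h => hb₂a₂ h.symm, Or.inr (by
    simp [Sym2.eq_swap])⟩
  have adj_b₂c₂ : G.Adj b₂ c₂ := (hadj b₂ c₂).2 ⟨fun h => hc₂b₂ h.symm, Or.inr (by
    simp [Sym2.eq_swap])⟩
  have adj_c₃b₃ : G.Adj c₃ b₃ := (hadj c₃ b₃).2 ⟨hc₃b₃', Or.inr (by simp)⟩
  have adj_b₃a₃ : G.Adj b₃ a₃ := (hadj b₃ a₃).2 ⟨fun h => ha₃b₃ h.symm, Or.inr (by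
    simp [Sym2.eq_swap])⟩
  have adj_a₃a₁ : G.Adj a₃ a₁ := (hadj a₃ a₁).2 ⟨fun h => ha₁a₃ h.symm, Or.inr (by
    simp [Sym2.eq_swap])⟩
  -- the list of remaining vertices of K
  have hfin : (K \ {a₁, c₂, c₃} : Set V).Finite := Set.toFinite _
  set L : List V := hfin.toFinset.toList with hLdef
  have hLnodup : L.Nodup := Finset.nodup_toList _
  have hLmem : ∀ x, x ∈ L ↔ x ∈ K ∧ x ≠ a₁ ∧ x ≠ c₂ ∧ x ≠ c₃ := by
    intro x
    rw [hLdef, Finset.mem_toList, Set.Finite.mem_toFinset, Set.mem_diff]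
    simp only [Set.mem_insert_iff, Set.mem_singleton_iff, not_or]
  have hmemL : ∀ x ∈ L, x ∈ K := fun x hx => ((hLmem x).1 hx).1
  have ha₁L : a₁ ∉ L := fun h => ((hLmem a₁).1 h).2.1 rfl
  have hc₂L : c₂ ∉ L := fun h => ((hLmem c₂).1 h).2.2.1 rfl
  have hc₃L : c₃ ∉ L := fun h => ((hLmem c₃).1 h).2.2.2 rfl
  -- middle walk from c₂ through L to c₃
  have hndLc₃ : (L ++ [c₃]).Nodup := by
    refine List.Nodup.append hLnodup (List.nodup_singleton _) ?_
    intro x hx hx'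
    rw [List.mem_singleton] at hx'
    exact hc₃L (hx' ▸ hx)
  have hndmid : (c₂ :: (L ++ [c₃])).Nodup := by
    refine List.nodup_cons.2 ⟨?_, hndLc₃⟩
    simp only [List.mem_append, List.mem_singleton, not_or]
    exact ⟨hc₂L, h23⟩
  obtain ⟨q, hq⟩ := exists_walk_through_list G K adjK c₃ hc₃ L c₂ hc₂
    (fun x hx => ((hLmem x).1 hx).1) hndmid
  -- assemble the cycle
  let t : G.Walk c₃ a₁ := Walk.cons adj_c₃b₃ (Walk.cons adj_b₃a₃ (Walk.cons adj_a₃a₁ Walk.nil))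
  let p : G.Walk a₂ a₁ := Walk.cons adj_a₂b₂ (Walk.cons adj_b₂c₂ (q.append t))
  have hpsup : p.support = a₂ :: b₂ :: ((c₂ :: (L ++ [c₃])) ++ [b₃, a₃, a₁]) := by
    simp [p, t, Walk.support_append, hq]
  -- nodup of the path support
  have hmem_first : ∀ x ∈ (c₂ :: (L ++ [c₃])), x ∈ K := by
    intro x hx
    rcases List.mem_cons.1 hx with rfl | hx
    · exact hc₂
    rcases List.mem_append.1 hx with hx | hx
    · exact hmemL x hx
    · rw [List.mem_singleton] at hx; exact hx ▸ hc₃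
  have hndM : ((c₂ :: (L ++ [c₃])) ++ [b₃, a₃, a₁]).Nodup := by
    refine List.Nodup.append hndmid (by simp [ha₃b₃.symm, ha₁b₃.symm, ha₁a₃.symm]) ?_
    intro x hx hx'
    have hxK := hmem_first x hx
    obtain ⟨_, _, hx3, hx4⟩ := hKne x hxK
    simp only [List.mem_cons, List.mem_singleton, List.not_mem_nil, or_false] at hx'
    rcases hx' with rfl | rfl | rfl
    · exact hx4 rfl
    · exact hx3 rfl
    · rcases List.mem_cons.1 hx with h | h
      · exact h12 h
      rcases List.mem_append.1 h with h | h
      · exact ha₁L h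
      · rw [List.mem_singleton] at h; exact h13 h
  have ha₂L : a₂ ∉ L := fun h => ha₂ (hmemL _ h)
  have hb₂L : b₂ ∉ L := fun h => hb₂ (hmemL _ h)
  have hnd : p.support.Nodup := by
    rw [hpsup]
    refine List.nodup_cons.2 ⟨?_, List.nodup_cons.2 ⟨?_, hndM⟩⟩
    · intro h
      rcases List.mem_cons.1 h with h | h
      · exact hb₂a₂ h.symm
      rcases List.mem_append.1 h with h | h
      · rcases List.mem_cons.1 h with h | h
        · exact hc₂a₂ h.symm
        rcases List.mem_append.1 h with h | h
        · exact ha₂L h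
        · exact hc₃a₂ (List.mem_singleton.1 h).symm
      · rcases List.mem_cons.1 h with h | h
        · exact ha₂b₃ h
        rcases List.mem_cons.1 h with h | h
        · exact ha₂a₃ h
        · exact ha₁a₂ (List.mem_singleton.1 h).symm
    · intro h
      rcases List.mem_append.1 h with h | h
      · rcases List.mem_cons.1 h with h | h
        · exact hc₂b₂ h.symm
        rcases List.mem_append.1 h with h | h
        · exact hb₂L h
        · exact hc₃b₂ (List.mem_singleton.1 h).symm
      · rcases List.mem_cons.1 h with h | h
        · exact hb₂b₃ h
        rcases List.mem_cons.1 h with h | h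
        · exact hb₂a₃ h
        · exact ha₁b₂ (List.mem_singleton.1 h).symm
  have hpath : p.IsPath := Walk.IsPath.mk' hnd
  -- s(a₁, a₂) is not an edge of p
  have hedge : s(a₁, a₂) ∉ p.edges := by
    intro h
    rw [show p = Walk.cons adj_a₂b₂ (Walk.cons adj_b₂c₂ (q.append t)) from rfl,
      Walk.edges_cons, List.mem_cons] at h
    rcases h with h | h
    · rw [Sym2.eq_iff] at h
      rcases h with ⟨h1, _⟩ | ⟨h1, _⟩
      · exact ha₁a₂ h1
      · exact ha₁b₂ h1
    · have : a₂ ∈ (Walk.cons adj_b₂c₂ (q.append t)).support :=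
        Walk.snd_mem_support_of_mem_edges _ h
      have hnd2 : (a₂ :: (Walk.cons adj_b₂c₂ (q.append t)).support).Nodup := by
        simpa [p] using hnd
      exact (List.nodup_cons.1 hnd2).1 this
  -- the hamiltonian cycle
  let c : G.Walk a₁ a₁ := Walk.cons adj_a₁a₂ p
  have hcyc : c.IsCycle := (Walk.cons_isCycle_iff p adj_a₁a₂).2 ⟨hpath, hedge⟩
  refine ⟨a₁, c, ?_⟩
  rw [Walk.isHamiltonianCycle_iff_isCycle_and_support_count_tail_eq_one]
  refine ⟨hcyc, fun v => ?_⟩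
  have hcs : c.support.tail = p.support := by simp [c]
  rw [hcs]
  refine List.count_eq_one_of_mem hnd ?_
  have hv : v ∈ K ∪ {b₂, a₂, a₃, b₃} := by rw [hcover]; trivial
  rw [hpsup]
  rcases hv with hv | hv
  · by_cases h1 : v = a₁
    · simp [h1]
    by_cases h2 : v = c₂
    · simp [h2]
    by_cases h3 : v = c₃
    · simp [h3]
    have : v ∈ L := (hLmem v).2 ⟨hv, h1, h2, h3⟩
    simp [this]
  · simp only [Set.mem_insert_iff, Set.mem_singleton_iff] at hv
    rcases hv with rfl | rfl | rfl | rfl <;> simp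
end
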